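/- Let 0 < 𝔭_f^- < 𝔭_f^+ < κ < 𝔭_c^- < 𝔭_c^+. There exist C > 0, δ > 0 and ε̄ > 0, independent of ε, such that for every 0 < ε < ε̄ the following holds (interaction of the interface with a small wave coming from the left, congested domain). Let U^ℓ, U^m be states with pressures in [𝔭_c^-, 𝔭_c^+] (congested) and U^r a state with pressure in [𝔭_f^-, 𝔭_f^+] (free), such that U^m = Φ₂^ε(σ')(U^ℓ) with |σ'| < δ and U^r = Φ₂^ε(σ̄'')(U^m) with σ̄'' < 0 (a 2-shock interface of strength σ̄''). Then there exists a unique pair (σ₁⁺, σ̄₂⁺) with σ̄₂⁺ < 0 such that U^r = Φ₂^ε(σ̄₂⁺)(Φ₁^ε(σ₁⁺)(U^ℓ)), the intermediate state Φ₁^ε(σ₁⁺)(U^ℓ) has pressure greater than κ, and |σ₁⁺| + |σ̄₂⁺ − σ̄''| ≤ C |σ'|. -/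

import Mathlib

open Set Filter MeasureTheory Topology

set_option linter.unusedSectionVars false
set_option linter.unusedVariables false
set_option maxHeartbeats 1000000

/-- The singular pressure law `𝒫_ε(τ) = κ τ^{-γᵢ} + ε (τ-1)^{-γ_c}`. -/
noncomputable def Pe (κ γi γc ε τ : ℝ) : ℝ := κ * τ ^ (-γi) + ε * (τ - 1) ^ (-γc)

/-- Forward wave map of the first family (1-shock for `σ ≥ 0`, 1-rarefaction for `σ < 0`)
for the p-system with specific-volume law `Tf`, in the variables `(p,u)`. -/
noncomputable def Phi1 (Tf : ℝ → ℝ) (σ : ℝ) (U : ℝ × ℝ) : ℝ × ℝ :=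
  if 0 ≤ σ then (U.1 + σ, U.2 - Real.sqrt ((Tf U.1 - Tf (U.1 + σ)) * σ))
  else (U.1 + σ, U.2 - ∫ ξ in U.1..(U.1 + σ), Real.sqrt (-deriv Tf ξ))

/-- Forward wave map of the second family (2-shock for `σ < 0`, 2-rarefaction for `σ > 0`)
for the p-system with specific-volume law `Tf`, in the variables `(p,u)`. -/
noncomputable def Phi2 (Tf : ℝ → ℝ) (σ : ℝ) (U : ℝ × ℝ) : ℝ × ℝ :=
  if σ < 0 then (U.1 + σ, U.2 - Real.sqrt ((Tf (U.1 + σ) - Tf U.1) * (-σ)))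
  else (U.1 + σ, U.2 + ∫ ξ in U.1..(U.1 + σ), Real.sqrt (-deriv Tf ξ))

section Aux

variable {κ γi γc ε : ℝ} (hκ : 0 < κ) (hγi : 1 < γi) (hγc : 1 < γc) (hε : 0 < ε)
  {Tf : ℝ → ℝ} (hT : ∀ p > (0:ℝ), 1 < Tf p ∧ Pe κ γi γc ε (Tf p) = p)

include hκ hγi hγc hε

lemma Pe_pos {τ : ℝ} (hτ : 1 < τ) : 0 < Pe κ γi γc ε τ := by
  have h0 : (0:ℝ) < τ := lt_trans one_pos hτ
  have h1 : (0:ℝ) < τ - 1 := by linarith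
  have := Real.rpow_pos_of_pos h0 (-γi)
  have := Real.rpow_pos_of_pos h1 (-γc)
  unfold Pe; positivity

lemma Pe_anti {τ τ' : ℝ} (hτ : 1 < τ) (h : τ < τ') : Pe κ γi γc ε τ' < Pe κ γi γc ε τ := by
  have h0 : (0:ℝ) < τ := lt_trans one_pos hτ
  have h1 : (0:ℝ) < τ - 1 := by linarith
  have e1 : τ' ^ (-γi) < τ ^ (-γi) := Real.rpow_lt_rpow_of_neg h0 h (by linarith)
  have e2 : (τ' - 1) ^ (-γc) < (τ - 1) ^ (-γc) :=
    Real.rpow_lt_rpow_of_neg h1 (by linarith) (by linarith)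
  unfold Pe
  have := mul_lt_mul_of_pos_left e1 hκ
  have := mul_lt_mul_of_pos_left e2 hε
  linarith

include hT

lemma T_lt {p τ : ℝ} (hp : 0 < p) (hτ : 1 < τ) (h : Pe κ γi γc ε τ < p) : Tf p < τ := by
  by_contra hc
  push_neg at hc
  rcases eq_or_lt_of_le hc with he | hlt
  · rw [← (hT p hp).2, ← he] at h; exact lt_irrefl _ h
  · have := Pe_anti hκ hγi hγc hε hτ hlt
    rw [(hT p hp).2] at this; linarith

lemma lt_T {p τ : ℝ} (hp : 0 < p) (hτ : 1 < τ) (h : p < Pe κ γi γc ε τ) : τ < Tf p := by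
  by_contra hc
  push_neg at hc
  rcases eq_or_lt_of_le hc with he | hlt
  · rw [← (hT p hp).2, he] at h; exact lt_irrefl _ h
  · have := Pe_anti hκ hγi hγc hε (hT p hp).1 hlt
    rw [(hT p hp).2] at this; linarith

lemma T_anti {p q : ℝ} (hp : 0 < p) (h : p < q) : Tf q < Tf p :=
  T_lt hκ hγi hγc hε hT (lt_trans hp h) (hT p hp).1 (by rw [(hT p hp).2]; exact h)

lemma T_anti_le {p q : ℝ} (hp : 0 < p) (h : p ≤ q) : Tf q ≤ Tf p := by
  rcases eq_or_lt_of_le h with rfl | h'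
  · exact le_refl _
  · exact le_of_lt (T_anti hκ hγi hγc hε hT hp h')

lemma T_cont {p : ℝ} (hp : 0 < p) : ContinuousAt Tf p := by
  rw [Metric.continuousAt_iff]
  intro e he
  set τ := Tf p with hτdef
  have hτ : 1 < τ := (hT p hp).1
  set e' : ℝ := min (e / 2) ((τ - 1) / 2) with he'def
  have he' : 0 < e' := lt_min (by linarith) (by linarith)
  have h1 : 1 < τ - e' := by
    have : e' ≤ (τ - 1) / 2 := min_le_right _ _
    linarith
  have h2 : 1 < τ + e' := by linarith
  set q1 := Pe κ γi γc ε (τ + e') with hq1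
  set q2 := Pe κ γi γc ε (τ - e') with hq2
  have hq1p : q1 < p := by
    have := Pe_anti hκ hγi hγc hε hτ (by linarith : τ < τ + e')
    rw [(hT p hp).2] at this; exact this
  have hpq2 : p < q2 := by
    have := Pe_anti hκ hγi hγc hε h1 (by linarith : τ - e' < τ)
    rw [(hT p hp).2] at this; exact this
  refine ⟨min (p - q1) (q2 - p), lt_min (by linarith) (by linarith), ?_⟩
  intro x hx
  rw [Real.dist_eq] at hx ⊢
  have habs := abs_lt.1 hx
  have hm1 := min_le_left (p - q1) (q2 - p)
  have hm2 := min_le_right (p - q1) (q2 - p)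
  have hx1 : q1 < x := by linarith [habs.1]
  have hx2 : x < q2 := by linarith [habs.2]
  have hx0 : 0 < x := lt_trans (Pe_pos hκ hγi hγc hε h2) hx1
  have hu : Tf x < τ + e' := T_lt hκ hγi hγc hε hT hx0 h2 hx1
  have hl : τ - e' < Tf x := lt_T hκ hγi hγc hε hT hx0 h1 hx2
  rw [abs_lt]
  constructor <;> [skip; skip] <;>
    · have : e' ≤ e / 2 := min_le_left _ _
      linarith

end Aux

noncomputable def pe' (κ γi γc ε τ : ℝ) : ℝ :=
  -(κ * γi * τ ^ (-γi - 1)) - ε * γc * (τ - 1) ^ (-γc - 1)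

section Aux2

variable {κ γi γc ε : ℝ} (hκ : 0 < κ) (hγi : 1 < γi) (hγc : 1 < γc) (hε : 0 < ε)
  {Tf : ℝ → ℝ} (hT : ∀ p > (0:ℝ), 1 < Tf p ∧ Pe κ γi γc ε (Tf p) = p)

include hκ hγi hγc hε

lemma Pe_hasDerivAt {τ : ℝ} (hτ : 1 < τ) :
    HasDerivAt (Pe κ γi γc ε) (pe' κ γi γc ε τ) τ := by
  have h0 : (0:ℝ) < τ := lt_trans one_pos hτ
  have h1 : τ - 1 ≠ 0 := by intro h; linarith [sub_eq_zero.1 h]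
  have ha : HasDerivAt (fun x : ℝ => x ^ (-γi)) (-γi * τ ^ (-γi - 1)) τ :=
    Real.hasDerivAt_rpow_const (Or.inl (ne_of_gt h0))
  have hb : HasDerivAt (fun x : ℝ => x - 1) 1 τ := (hasDerivAt_id τ).sub_const 1
  have hc' : HasDerivAt (fun x : ℝ => (x - 1) ^ (-γc)) (1 * -γc * (τ - 1) ^ (-γc - 1)) τ :=
    HasDerivAt.rpow_const hb (Or.inl h1)
  have := (ha.const_mul κ).add (hc'.const_mul ε)
  refine this.congr_deriv ?_
  unfold pe'; ring

lemma pe'_neg {τ : ℝ} (hτ : 1 < τ) : pe' κ γi γc ε τ < 0 := by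
  have h0 : (0:ℝ) < τ := lt_trans one_pos hτ
  have h1 : (0:ℝ) < τ - 1 := by linarith
  have e1 : 0 < τ ^ (-γi - 1) := Real.rpow_pos_of_pos h0 _
  have e2 : 0 < (τ - 1) ^ (-γc - 1) := Real.rpow_pos_of_pos h1 _
  unfold pe'
  nlinarith [mul_pos (mul_pos hκ (lt_trans one_pos hγi)) e1,
    mul_pos (mul_pos hε (lt_trans one_pos hγc)) e2]

lemma pe'_bound {τ : ℝ} (hτ : 1 < τ) :
    κ * γi * τ ^ (-γi - 1) ≤ -pe' κ γi γc ε τ := by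
  have h1 : (0:ℝ) < τ - 1 := by linarith
  have e2 : 0 < (τ - 1) ^ (-γc - 1) := Real.rpow_pos_of_pos h1 _
  unfold pe'
  nlinarith [mul_pos (mul_pos hε (lt_trans one_pos hγc)) e2]

include hT

lemma T_hasDerivAt {p : ℝ} (hp : 0 < p) :
    HasDerivAt Tf ((pe' κ γi γc ε (Tf p))⁻¹) p := by
  refine HasDerivAt.of_local_left_inverse (T_cont hκ hγi hγc hε hT hp)
    (Pe_hasDerivAt hκ hγi hγc hε (hT p hp).1)
    (ne_of_lt (pe'_neg hκ hγi hγc hε (hT p hp).1)) ?_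
  filter_upwards [Ioi_mem_nhds hp] with y hy
  exact (hT y hy).2

lemma deriv_T {p : ℝ} (hp : 0 < p) : deriv Tf p = (pe' κ γi γc ε (Tf p))⁻¹ :=
  (T_hasDerivAt hκ hγi hγc hε hT hp).deriv

lemma neg_deriv_T_pos {p : ℝ} (hp : 0 < p) : 0 < -deriv Tf p := by
  rw [deriv_T hκ hγi hγc hε hT hp]
  have := pe'_neg hκ hγi hγc hε (hT p hp).1
  have : (pe' κ γi γc ε (Tf p))⁻¹ < 0 := inv_lt_zero.2 this
  linarith

lemma neg_deriv_T_le {p B : ℝ} (hp : 0 < p) (hB : Tf p ≤ B) :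
    -deriv Tf p ≤ (κ * γi)⁻¹ * B ^ (γi + 1) := by
  rw [deriv_T hκ hγi hγc hε hT hp, ← inv_neg]
  set τ := Tf p with hτ
  have hτ1 : 1 < τ := (hT p hp).1
  have h0 : (0:ℝ) < τ := lt_trans one_pos hτ1
  have hB1 : (1:ℝ) < B := lt_of_lt_of_le hτ1 hB
  have hB0 : (0:ℝ) < B := lt_trans one_pos hB1
  have e1 : B ^ (-γi - 1) ≤ τ ^ (-γi - 1) :=
    Real.rpow_le_rpow_of_nonpos h0 hB (by linarith)
  have e2 : 0 < B ^ (-γi - 1) := Real.rpow_pos_of_pos hB0 _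
  have e3 : κ * γi * B ^ (-γi - 1) ≤ -pe' κ γi γc ε τ := by
    have := pe'_bound hκ hγi hγc hε hτ1
    have h4 : κ * γi * B ^ (-γi - 1) ≤ κ * γi * τ ^ (-γi - 1) := by
      have : 0 < κ * γi := mul_pos hκ (lt_trans one_pos hγi)
      exact mul_le_mul_of_nonneg_left e1 (le_of_lt this)
    linarith
  have e4 : 0 < κ * γi * B ^ (-γi - 1) :=
    mul_pos (mul_pos hκ (lt_trans one_pos hγi)) e2
  have e5 : (-pe' κ γi γc ε τ)⁻¹ ≤ (κ * γi * B ^ (-γi - 1))⁻¹ :=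
    inv_anti₀ e4 e3
  refine le_trans e5 (le_of_eq ?_)
  rw [mul_inv]
  congr 1
  rw [show -γi - 1 = -(γi + 1) by ring, Real.rpow_neg (le_of_lt hB0), inv_inv]

end Aux2

section Aux3

variable {κ γi γc ε : ℝ} (hκ : 0 < κ) (hγi : 1 < γi) (hγc : 1 < γc) (hε : 0 < ε)
  {Tf : ℝ → ℝ} (hT : ∀ p > (0:ℝ), 1 < Tf p ∧ Pe κ γi γc ε (Tf p) = p)
  {B c : ℝ} (hc : 0 < c) (hzone : ∀ x, c ≤ x → Tf x ≤ B)

include hκ hγi hγc hε hT hc hzone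

lemma T_lip {x y : ℝ} (hx : c ≤ x) (hy : c ≤ y) :
    |Tf x - Tf y| ≤ ((κ * γi)⁻¹ * B ^ (γi + 1)) * |x - y| := by
  have key := Convex.norm_image_sub_le_of_norm_hasDerivWithin_le
    (f := Tf) (f' := fun q => (pe' κ γi γc ε (Tf q))⁻¹) (s := Ici c)
    (C := (κ * γi)⁻¹ * B ^ (γi + 1)) ?_ ?_ (convex_Ici c) hy hx
  · simpa [Real.norm_eq_abs] using key
  · intro q hq
    exact (T_hasDerivAt hκ hγi hγc hε hT (lt_of_lt_of_le hc hq)).hasDerivWithinAt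
  · intro q hq
    have hq0 : 0 < q := lt_of_lt_of_le hc hq
    have h1 := neg_deriv_T_le hκ hγi hγc hε hT hq0 (hzone q hq)
    rw [deriv_T hκ hγi hγc hε hT hq0] at h1
    have h2 := pe'_neg hκ hγi hγc hε (hT q hq0).1
    have h3 : (pe' κ γi γc ε (Tf q))⁻¹ < 0 := inv_lt_zero.2 h2
    rw [Real.norm_eq_abs, abs_of_neg h3]
    linarith

lemma sqrtDT_nonneg (ξ : ℝ) : 0 ≤ Real.sqrt (-deriv Tf ξ) := Real.sqrt_nonneg _

lemma sqrtDT_le {ξ : ℝ} (hξ : c ≤ ξ) :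
    Real.sqrt (-deriv Tf ξ) ≤ Real.sqrt ((κ * γi)⁻¹ * B ^ (γi + 1)) :=
  Real.sqrt_le_sqrt (neg_deriv_T_le hκ hγi hγc hε hT (lt_of_lt_of_le hc hξ) (hzone ξ hξ))

lemma sqrtDT_integrable {x y : ℝ} (hx : c ≤ x) (hy : c ≤ y) :
    IntervalIntegrable (fun ξ => Real.sqrt (-deriv Tf ξ)) volume x y := by
  rw [intervalIntegrable_iff]
  have hg : MeasureTheory.IntegrableOn
      (fun _ : ℝ => Real.sqrt ((κ * γi)⁻¹ * B ^ (γi + 1))) (Set.uIoc x y) volume :=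
    MeasureTheory.integrableOn_const measure_Ioc_lt_top.ne
  refine MeasureTheory.Integrable.mono' hg ?_ ?_
  · exact ((measurable_deriv Tf).neg.sqrt).aestronglyMeasurable
  · refine (MeasureTheory.ae_restrict_iff' measurableSet_uIoc).2 (ae_of_all _ ?_)
    intro a ha
    have hca : c ≤ a := le_trans (le_min hx hy) (le_of_lt ha.1)
    rw [Real.norm_eq_abs, abs_of_nonneg (Real.sqrt_nonneg _)]
    exact sqrtDT_le hκ hγi hγc hε hT hc hzone hca

lemma sqrtDT_integral_nonneg {x y : ℝ} (hxy : x ≤ y) :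
    0 ≤ ∫ ξ in x..y, Real.sqrt (-deriv Tf ξ) :=
  intervalIntegral.integral_nonneg hxy (fun u _ => Real.sqrt_nonneg _)

lemma sqrtDT_integral_le {x y : ℝ} (hx : c ≤ x) (hxy : x ≤ y) :
    (∫ ξ in x..y, Real.sqrt (-deriv Tf ξ)) ≤
      Real.sqrt ((κ * γi)⁻¹ * B ^ (γi + 1)) * (y - x) := by
  have hy : c ≤ y := le_trans hx hxy
  have h1 := intervalIntegral.integral_mono_on (μ := volume) hxy
    (sqrtDT_integrable hκ hγi hγc hε hT hc hzone hx hy)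
    (intervalIntegrable_const (c := Real.sqrt ((κ * γi)⁻¹ * B ^ (γi + 1))))
    (fun u hu => sqrtDT_le hκ hγi hγc hε hT hc hzone (le_trans hx hu.1))
  rw [intervalIntegral.integral_const] at h1
  rw [mul_comm]
  simpa using h1

end Aux3

lemma rpow_inv_eval {x γ : ℝ} (hx : 0 < x) (hγ : 0 < γ) : (x ^ (γ⁻¹)) ^ (-γ) = x⁻¹ := by
  rw [← Real.rpow_mul hx.le, show γ⁻¹ * -γ = -1 by field_simp, Real.rpow_neg_one]

lemma Phi1_fst (Tf : ℝ → ℝ) (σ : ℝ) (U : ℝ × ℝ) : (Phi1 Tf σ U).1 = U.1 + σ := by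
  unfold Phi1; split_ifs <;> rfl

lemma Phi2_fst (Tf : ℝ → ℝ) (σ : ℝ) (U : ℝ × ℝ) : (Phi2 Tf σ U).1 = U.1 + σ := by
  unfold Phi2; split_ifs <;> rfl

lemma Phi2_snd_neg (Tf : ℝ → ℝ) {σ : ℝ} (hσ : σ < 0) (U : ℝ × ℝ) :
    (Phi2 Tf σ U).2 = U.2 - Real.sqrt ((Tf (U.1 + σ) - Tf U.1) * (-σ)) := by
  unfold Phi2; rw [if_pos hσ]

lemma Phi2_snd_nonneg (Tf : ℝ → ℝ) {σ : ℝ} (hσ : 0 ≤ σ) (U : ℝ × ℝ) :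
    (Phi2 Tf σ U).2 = U.2 + ∫ ξ in U.1..(U.1 + σ), Real.sqrt (-deriv Tf ξ) := by
  unfold Phi2; rw [if_neg (not_lt.2 hσ)]

set_option maxHeartbeats 1000000 in
/-- Interaction of the 2-shock interface with a small 2-wave coming from the left
(congested) domain: the outgoing pattern is a 1-wave of strength `σ₁⁺` connecting
congested states and a 2-shock interface of strength `σ̄₂⁺ < 0`, unique, with
`|σ₁⁺| + |σ̄₂⁺ − σ̄''| ≤ C|σ'|`, with `C` independent of `ε`. -/
theorem stmt15 (κ γi γc pf1 pf2 pc1 pc2 : ℝ)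
    (hκ : 0 < κ) (hγi : 1 < γi) (hγc : 1 < γc)
    (hpf1 : 0 < pf1) (hpf12 : pf1 < pf2) (hpf2 : pf2 < κ)
    (hpc1 : κ < pc1) (hpc12 : pc1 < pc2)
    (T : ℝ → ℝ → ℝ)
    (hT : ∀ ε > (0:ℝ), ∀ p > (0:ℝ), 1 < T ε p ∧ Pe κ γi γc ε (T ε p) = p) :
    ∃ C δ εb : ℝ, 0 < C ∧ 0 < δ ∧ 0 < εb ∧
      ∀ ε, 0 < ε → ε < εb →
        ∀ Ul Um Ur : ℝ × ℝ, ∀ σ' σb'' : ℝ,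
          Ul.1 ∈ Icc pc1 pc2 → Um.1 ∈ Icc pc1 pc2 → Ur.1 ∈ Icc pf1 pf2 →
          Um = Phi2 (T ε) σ' Ul → |σ'| < δ →
          σb'' < 0 → Ur = Phi2 (T ε) σb'' Um →
          ∃ σ1 σb2 : ℝ, σb2 < 0 ∧
            Ur = Phi2 (T ε) σb2 (Phi1 (T ε) σ1 Ul) ∧
            κ < (Phi1 (T ε) σ1 Ul).1 ∧
            |σ1| + |σb2 - σb''| ≤ C * |σ'| ∧
            ∀ τ1 τ2 : ℝ, τ2 < 0 → Ur = Phi2 (T ε) τ2 (Phi1 (T ε) τ1 Ul) →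
              κ < (Phi1 (T ε) τ1 Ul).1 → τ1 = σ1 ∧ τ2 = σb2 := by
  have hγi0 : (0:ℝ) < γi := lt_trans one_pos hγi
  have hγc0 : (0:ℝ) < γc := lt_trans one_pos hγc
  obtain ⟨τ0, hτ0def⟩ : ∃ x : ℝ, x = (κ / pf2) ^ (γi⁻¹) := ⟨_, rfl⟩
  have hbase : 1 < κ / pf2 := (one_lt_div (by linarith)).2 hpf2
  have hbase0 : 0 < κ / pf2 := lt_trans one_pos hbase
  have hτ0 : 1 < τ0 := by
    rw [hτ0def]
    exact (Real.one_lt_rpow_iff_of_pos hbase0).2 (Or.inl ⟨hbase, by positivity⟩)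
  have hτ0inv : κ * τ0 ^ (-γi) = pf2 := by
    rw [hτ0def, rpow_inv_eval hbase0 hγi0]; field_simp
  obtain ⟨τ1, hτ1def⟩ : ∃ x : ℝ, x = 1 + (τ0 - 1) / 2 := ⟨_, rfl⟩
  have hτ1 : 1 < τ1 := by rw [hτ1def]; linarith
  have hτ1τ0 : τ1 < τ0 := by rw [hτ1def]; linarith
  obtain ⟨τ2, hτ2def⟩ : ∃ x : ℝ, x = (2 * κ / pf1) ^ (γi⁻¹) := ⟨_, rfl⟩
  have hbase2 : 1 < 2 * κ / pf1 := (one_lt_div hpf1).2 (by linarith)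
  have hbase20 : 0 < 2 * κ / pf1 := lt_trans one_pos hbase2
  have hτ2 : 1 < τ2 := by
    rw [hτ2def]
    exact (Real.one_lt_rpow_iff_of_pos hbase20).2 (Or.inl ⟨hbase2, by positivity⟩)
  have hτ2inv : κ * τ2 ^ (-γi) = pf1 / 2 := by
    rw [hτ2def, rpow_inv_eval hbase20 hγi0]; field_simp
  have hτ0τ2 : τ0 < τ2 := by
    rw [hτ0def, hτ2def]
    apply Real.rpow_lt_rpow (le_of_lt hbase0) _ (by positivity)
    rw [div_lt_div_iff₀ (by linarith) hpf1]
    nlinarith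
  obtain ⟨pκ, hpκdef⟩ : ∃ x : ℝ, x = (κ + pc1) / 2 := ⟨_, rfl⟩
  have hpκ1 : κ < pκ := by rw [hpκdef]; linarith
  have hpκ2 : pκ < pc1 := by rw [hpκdef]; linarith
  obtain ⟨pM, hpMdef⟩ : ∃ x : ℝ, x = pc2 + 1 := ⟨_, rfl⟩
  have hpM1 : pc2 < pM := by rw [hpMdef]; linarith
  have hpM0 : 0 < pM := by rw [hpMdef]; linarith
  obtain ⟨K, hKdef⟩ : ∃ x : ℝ, x = (κ * γi)⁻¹ * τ1 ^ (γi + 1) := ⟨_, rfl⟩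
  have hK0 : 0 < K := by
    rw [hKdef]
    have := Real.rpow_pos_of_pos (lt_trans one_pos hτ1) (γi + 1)
    positivity
  obtain ⟨sK, hsKdef⟩ : ∃ x : ℝ, x = Real.sqrt K := ⟨_, rfl⟩
  have hsK0 : 0 < sK := by rw [hsKdef]; exact Real.sqrt_pos.2 hK0
  obtain ⟨m, hmdef⟩ : ∃ x : ℝ, x = τ0 - τ1 := ⟨_, rfl⟩
  have hm0 : 0 < m := by rw [hmdef]; linarith
  obtain ⟨mS, hmSdef⟩ : ∃ x : ℝ, x = Real.sqrt (m * (pκ - pf2)) := ⟨_, rfl⟩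
  have hmS0 : 0 < mS := by
    rw [hmSdef]
    exact Real.sqrt_pos.2 (mul_pos hm0 (by linarith))
  obtain ⟨Mb, hMbdef⟩ : ∃ x : ℝ, x = Real.sqrt (τ2 * pM) := ⟨_, rfl⟩
  have hMb0 : 0 < Mb := by
    rw [hMbdef]
    exact Real.sqrt_pos.2 (mul_pos (by linarith) hpM0)
  obtain ⟨L, hLdef⟩ : ∃ x : ℝ, x = sK + (K * pM + τ2) / (2 * mS) := ⟨_, rfl⟩
  have hL0 : 0 < L := by
    rw [hLdef]
    have h1 : 0 < K * pM + τ2 := by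
      have := mul_pos hK0 hpM0; linarith
    have h2 : 0 < (K * pM + τ2) / (2 * mS) := div_pos h1 (by linarith)
    linarith
  obtain ⟨C0, hC0def⟩ : ∃ x : ℝ, x = (L + 1) * (2 * Mb) / m := ⟨_, rfl⟩
  have hC00 : 0 < C0 := by
    rw [hC0def]
    exact div_pos (mul_pos (by linarith) (by linarith)) hm0
  have hC0slope : m * C0 / (2 * Mb) = L + 1 := by
    rw [hC0def]; field_simp
  obtain ⟨Cf, hCfdef⟩ : ∃ x : ℝ, x = 2 * C0 + 1 := ⟨_, rfl⟩
  obtain ⟨δf, hδfdef⟩ : ∃ x : ℝ, x = min ((pc1 - κ) / 2) 1 / C0 := ⟨_, rfl⟩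
  have hδf0 : 0 < δf := by
    rw [hδfdef]; exact div_pos (lt_min (by linarith) one_pos) hC00
  have hδfC0 : C0 * δf ≤ min ((pc1 - κ) / 2) 1 := by
    rw [hδfdef, mul_div_assoc']
    rw [mul_comm, mul_div_assoc, div_self (ne_of_gt hC00), mul_one]
  -- epsilon bounds
  have hτ1pow : τ1 ^ (-γi) < 1 := Real.rpow_lt_one_of_one_lt_of_neg hτ1 (by linarith)
  have hτ1pow0 : 0 < τ1 ^ (-γi) := Real.rpow_pos_of_pos (lt_trans one_pos hτ1) _
  obtain ⟨ε1, hε1def⟩ : ∃ x : ℝ, x = (κ - κ * τ1 ^ (-γi)) * (τ1 - 1) ^ γc := ⟨_, rfl⟩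
  have hε10 : 0 < ε1 := by
    rw [hε1def]
    have h1 : κ * τ1 ^ (-γi) < κ * 1 := mul_lt_mul_of_pos_left hτ1pow hκ
    have h2 : (0:ℝ) < (τ1 - 1) ^ γc := Real.rpow_pos_of_pos (by linarith) _
    rw [mul_one] at h1
    exact mul_pos (by linarith) h2
  obtain ⟨ε2, hε2def⟩ : ∃ x : ℝ, x = (pf1 / 2) * (τ2 - 1) ^ γc := ⟨_, rfl⟩
  have hε20 : 0 < ε2 := by
    rw [hε2def]
    have h2 : (0:ℝ) < (τ2 - 1) ^ γc := Real.rpow_pos_of_pos (by linarith) _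
    exact mul_pos (by linarith) h2
  refine ⟨Cf, δf, min ε1 ε2, by rw [hCfdef]; linarith, hδf0, lt_min hε10 hε20, ?_⟩
  intro ε hε hεb Ul Um Ur σ' σb'' hUl hUm hUr hUmEq hσδ hσb hUrEq
  have hT' : ∀ p > (0:ℝ), 1 < T ε p ∧ Pe κ γi γc ε (T ε p) = p := hT ε hε
  -- zone bounds
  have hPeτ1 : Pe κ γi γc ε τ1 < κ := by
    unfold Pe
    have hε1' : ε < ε1 := lt_of_lt_of_le hεb (min_le_left _ _)
    have h2 : (0:ℝ) < (τ1 - 1) ^ (-γc) := Real.rpow_pos_of_pos (by linarith) _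
    have h3 : ε * (τ1 - 1) ^ (-γc) < ε1 * (τ1 - 1) ^ (-γc) :=
      mul_lt_mul_of_pos_right hε1' h2
    have h4 : ε1 * (τ1 - 1) ^ (-γc) = κ - κ * τ1 ^ (-γi) := by
      rw [hε1def, mul_assoc, ← Real.rpow_add (by linarith : (0:ℝ) < τ1 - 1)]
      simp
    linarith
  have hPeτ2 : Pe κ γi γc ε τ2 < pf1 := by
    unfold Pe
    have hε2' : ε < ε2 := lt_of_lt_of_le hεb (min_le_right _ _)
    have h2 : (0:ℝ) < (τ2 - 1) ^ (-γc) := Real.rpow_pos_of_pos (by linarith) _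
    have h3 : ε * (τ2 - 1) ^ (-γc) < ε2 * (τ2 - 1) ^ (-γc) :=
      mul_lt_mul_of_pos_right hε2' h2
    have h4 : ε2 * (τ2 - 1) ^ (-γc) = pf1 / 2 := by
      rw [hε2def, mul_assoc, ← Real.rpow_add (by linarith : (0:ℝ) < τ2 - 1)]
      simp
    linarith
  have hzone1 : ∀ x, κ ≤ x → T ε x ≤ τ1 := by
    intro x hx
    exact le_of_lt (T_lt hκ hγi hγc hε hT' (lt_of_lt_of_le hκ hx) hτ1
      (lt_of_lt_of_le hPeτ1 hx))
  have hzone2 : ∀ x, pf1 ≤ x → T ε x ≤ τ2 := by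
    intro x hx
    exact le_of_lt (T_lt hκ hγi hγc hε hT' (lt_of_lt_of_le hpf1 hx) hτ2
      (lt_of_lt_of_le hPeτ2 hx))
  have hzone3 : ∀ p, 0 < p → p ≤ pf2 → τ0 ≤ T ε p := by
    intro p hp hple
    have hPeτ0 : pf2 < Pe κ γi γc ε τ0 := by
      unfold Pe
      have h2 : (0:ℝ) < ε * (τ0 - 1) ^ (-γc) :=
        mul_pos hε (Real.rpow_pos_of_pos (by linarith) _)
      linarith [hτ0inv]
    exact le_of_lt (lt_T hκ hγi hγc hε hT' hp hτ0 (lt_of_le_of_lt hple hPeτ0))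
  -- basic facts about the states
  have hq1 : pf1 ≤ Ur.1 := hUr.1
  have hq2 : Ur.1 ≤ pf2 := hUr.2
  have ha1 : pc1 ≤ Ul.1 := hUl.1
  have ha2 : Ul.1 ≤ pc2 := hUl.2
  have hb1 : pc1 ≤ Um.1 := hUm.1
  have hb2 : Um.1 ≤ pc2 := hUm.2
  have hUm1 : Um.1 = Ul.1 + σ' := by rw [hUmEq, Phi2_fst]
  have hUr1 : Ur.1 = Um.1 + σb'' := by rw [hUrEq, Phi2_fst]
  have hq0 : 0 < Ur.1 := lt_of_lt_of_le hpf1 hq1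
  have hqκ : Ur.1 < κ := lt_of_le_of_lt hq2 hpf2
  have ha0 : κ < Ul.1 := lt_of_lt_of_le hpc1 ha1
  -- the wave functions
  obtain ⟨S2, hS2def⟩ : ∃ f : ℝ → ℝ,
      f = fun t => Real.sqrt ((T ε Ur.1 - T ε (Ul.1 + t)) * (Ul.1 + t - Ur.1)) := ⟨_, rfl⟩
  obtain ⟨G, hGdef⟩ : ∃ f : ℝ → ℝ,
      f = fun t => ∫ ξ in Ul.1..(Ul.1 + t), Real.sqrt (-deriv (T ε) ξ) := ⟨_, rfl⟩
  obtain ⟨S1, hS1def⟩ : ∃ f : ℝ → ℝ,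
      f = fun t => if 0 ≤ t then Real.sqrt ((T ε Ul.1 - T ε (Ul.1 + t)) * t) else G t :=
    ⟨_, rfl⟩
  obtain ⟨F, hFdef⟩ : ∃ f : ℝ → ℝ, f = fun t => Ul.2 - S1 t - S2 t := ⟨_, rfl⟩
  -- Phi1 second component in terms of S1
  have hPhi1snd : ∀ t : ℝ, (Phi1 (T ε) t Ul).2 = Ul.2 - S1 t := by
    intro t
    rw [hS1def]
    unfold Phi1
    split_ifs with h
    · simp [h]
    · simp [h, hGdef]
  -- the key computation
  have key : ∀ t : ℝ, κ < Ul.1 + t →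
      Phi2 (T ε) (Ur.1 - (Ul.1 + t)) (Phi1 (T ε) t Ul) = (Ur.1, F t) := by
    intro t ht
    have hσneg : Ur.1 - (Ul.1 + t) < 0 := by linarith
    have hV1 : (Phi1 (T ε) t Ul).1 = Ul.1 + t := Phi1_fst _ _ _
    rw [Prod.ext_iff]
    constructor
    · rw [Phi2_fst, hV1]; ring
    · rw [Phi2_snd_neg _ hσneg, hV1, hPhi1snd t,
        show Ul.1 + t + (Ur.1 - (Ul.1 + t)) = Ur.1 by ring,
        show -(Ur.1 - (Ul.1 + t)) = Ul.1 + t - Ur.1 by ring, hFdef, hS2def]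
  -- characterization of solutions
  have hsol : ∀ t1 t2 : ℝ, t2 < 0 → κ < Ul.1 + t1 →
      Ur = Phi2 (T ε) t2 (Phi1 (T ε) t1 Ul) →
      t2 = Ur.1 - Ul.1 - t1 ∧ Ur.2 = F t1 := by
    intro t1 t2 ht2 hκt1 hEq
    have h1 : Ur.1 = Ul.1 + t1 + t2 := by
      rw [hEq, Phi2_fst, Phi1_fst]
    have h2 : t2 = Ur.1 - Ul.1 - t1 := by linarith
    have h3 := key t1 hκt1
    rw [show Ur.1 - (Ul.1 + t1) = t2 by linarith] at h3
    rw [← hEq] at h3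
    exact ⟨h2, by rw [h3]⟩
  -- Lipschitz bound for T on [κ, ∞)
  have hlip : ∀ x y, κ ≤ x → κ ≤ y → |T ε x - T ε y| ≤ K * |x - y| := by
    intro x y hx hy
    rw [hKdef]
    exact T_lip hκ hγi hγc hε hT' hκ hzone1 hx hy
  -- increments of G
  have hGdiff : ∀ u v, κ ≤ Ul.1 + u → u ≤ v →
      0 ≤ G v - G u ∧ G v - G u ≤ sK * (v - u) := by
    intro u v hu huv
    have hv : κ ≤ Ul.1 + v := by linarith only [hu, huv]
    have haa : κ ≤ Ul.1 := le_of_lt ha0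
    have hadd := intervalIntegral.integral_add_adjacent_intervals
      (sqrtDT_integrable hκ hγi hγc hε hT' hκ hzone1 haa hu)
      (sqrtDT_integrable hκ hγi hγc hε hT' hκ hzone1 hu hv)
    have hGv : G v - G u = ∫ ξ in (Ul.1 + u)..(Ul.1 + v), Real.sqrt (-deriv (T ε) ξ) := by
      rw [hGdef]; dsimp only; linarith only [hadd]
    constructor
    · rw [hGv]
      exact sqrtDT_integral_nonneg hκ hγi hγc hε hT' hκ hzone1 (by linarith only [huv])
    · rw [hGv]
      have h2 := sqrtDT_integral_le hκ hγi hγc hε hT' hκ hzone1 hu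
        (by linarith only [huv] : Ul.1 + u ≤ Ul.1 + v)
      have h3 : Ul.1 + v - (Ul.1 + u) = v - u := by ring
      rw [h3] at h2
      rw [hsKdef, hKdef]
      exact h2
  have hG0 : G 0 = 0 := by rw [hGdef]; simp
  -- bounds for the factor f(t) = T q - T (a+t)
  have hfm : ∀ t, κ < Ul.1 + t → m ≤ T ε Ur.1 - T ε (Ul.1 + t) := by
    intro t ht
    have h1 : T ε (Ul.1 + t) ≤ τ1 := hzone1 _ (le_of_lt ht)
    have h2 : τ0 ≤ T ε Ur.1 := hzone3 _ hq0 hq2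
    rw [hmdef]; linarith only [h1, h2]
  have hfub : ∀ t, κ < Ul.1 + t → T ε Ur.1 - T ε (Ul.1 + t) ≤ τ2 := by
    intro t ht
    have h2 : T ε Ur.1 ≤ τ2 := hzone2 _ hq1
    have h3 : 1 < T ε (Ul.1 + t) := (hT' _ (lt_trans hκ ht)).1
    linarith only [h2, h3]
  have hS2sq : ∀ t, κ < Ul.1 + t →
      S2 t ^ 2 = (T ε Ur.1 - T ε (Ul.1 + t)) * (Ul.1 + t - Ur.1) := by
    intro t ht
    rw [hS2def]; dsimp only
    exact Real.sq_sqrt (mul_nonneg (le_trans hm0.le (hfm t ht))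
      (by linarith only [ht, hqκ]))
  have hS2nonneg : ∀ t, 0 ≤ S2 t := by
    intro t; rw [hS2def]; exact Real.sqrt_nonneg _
  have hS2mono : ∀ u v, κ < Ul.1 + u → u < v → S2 u < S2 v := by
    intro u v hu huv
    have hv : κ < Ul.1 + v := by linarith only [hu, huv]
    have h1 := hfm v hv
    have h2 : T ε (Ul.1 + v) ≤ T ε (Ul.1 + u) :=
      T_anti_le hκ hγi hγc hε hT' (by linarith only [hu, hκ]) (by linarith only [huv])
    have h0u := hfm u hu
    have e1 : 0 < Ul.1 + u - Ur.1 := by linarith only [hu, hqκ]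
    have P := mul_pos hm0 (sub_pos.2 huv)
    have Q := mul_nonneg (sub_nonneg.2 h2) e1.le
    have S := mul_nonneg (sub_nonneg.2 h1) (le_of_lt (sub_pos.2 huv))
    rw [hS2def]; dsimp only
    apply Real.sqrt_lt_sqrt
    · exact mul_nonneg (by linarith only [h0u, hm0]) (by linarith only [e1])
    · nlinarith only [P, Q, S]
  have hS2lb : ∀ t, pκ ≤ Ul.1 + t → mS ≤ S2 t := by
    intro t ht
    have hκt : κ < Ul.1 + t := lt_of_lt_of_le hpκ1 ht
    have h1 := hfm t hκt
    rw [hmSdef, hS2def]; dsimp only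
    apply Real.sqrt_le_sqrt
    exact mul_le_mul h1 (by linarith only [ht, hq2]) (by linarith only [hpκ1, hpf2, hq2])
      (by linarith only [h1, hm0])
  have hS2ub : ∀ t, κ < Ul.1 + t → Ul.1 + t ≤ pM → S2 t ≤ Mb := by
    intro t ht htM
    rw [hMbdef, hS2def]; dsimp only
    apply Real.sqrt_le_sqrt
    exact mul_le_mul (hfub t ht) (by linarith only [htM, hq1, hpf1])
      (by linarith only [ht, hqκ]) (by linarith only [hτ2])
  have hS2slope : ∀ u v, pκ ≤ Ul.1 + u → u ≤ v → Ul.1 + v ≤ pM →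
      m * (v - u) / (2 * Mb) ≤ S2 v - S2 u := by
    intro u v hu huv hvM
    rcases eq_or_lt_of_le huv with rfl | hlt
    · simp
    have hκu : κ < Ul.1 + u := lt_of_lt_of_le hpκ1 hu
    have hκv : κ < Ul.1 + v := by linarith only [hκu, hlt]
    have hmono := hS2mono u v hκu hlt
    have hsqu := hS2sq u hκu
    have hsqv := hS2sq v hκv
    have h1 := hfm v hκv
    have h2 : T ε (Ul.1 + v) ≤ T ε (Ul.1 + u) :=
      T_anti_le hκ hγi hγc hε hT' (by linarith only [hκu, hκ]) (by linarith only [hlt])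
    have e1 : 0 < Ul.1 + u - Ur.1 := by linarith only [hκu, hqκ]
    have Q := mul_nonneg (sub_nonneg.2 h2) e1.le
    have S := mul_nonneg (sub_nonneg.2 h1) (le_of_lt (sub_pos.2 hlt))
    have hsq : m * (v - u) ≤ S2 v ^ 2 - S2 u ^ 2 := by
      rw [hsqu, hsqv]
      nlinarith only [Q, S]
    have hubv : S2 v ≤ Mb := hS2ub v hκv hvM
    have hubu : S2 u ≤ Mb := hS2ub u hκu (by linarith only [hvM, hlt])
    have hnn := hS2nonneg u
    rw [div_le_iff₀ (by linarith only [hMb0] : (0:ℝ) < 2 * Mb)]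
    have A := mul_le_mul_of_nonneg_left
      (show S2 v + S2 u ≤ 2 * Mb by linarith only [hubv, hubu])
      (le_of_lt (sub_pos.2 hmono))
    nlinarith only [A, hsq]
  have hS2lip : ∀ u v, pκ ≤ Ul.1 + u → Ul.1 + u ≤ pM → pκ ≤ Ul.1 + v → Ul.1 + v ≤ pM →
      |S2 v - S2 u| ≤ ((K * pM + τ2) / (2 * mS)) * |v - u| := by
    intro u v h1 h2 h3 h4
    have hκu : κ < Ul.1 + u := lt_of_lt_of_le hpκ1 h1
    have hκv : κ < Ul.1 + v := lt_of_lt_of_le hpκ1 h3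
    have hfd : |T ε (Ul.1 + u) - T ε (Ul.1 + v)| ≤ K * |v - u| := by
      have h5 := hlip (Ul.1 + u) (Ul.1 + v) (le_of_lt hκu) (le_of_lt hκv)
      have h6 : Ul.1 + u - (Ul.1 + v) = -(v - u) := by ring
      rw [h6, abs_neg] at h5
      exact h5
    have hsqd : |S2 v ^ 2 - S2 u ^ 2| ≤ (K * pM + τ2) * |v - u| := by
      rw [hS2sq v hκv, hS2sq u hκu]
      have hid : (T ε Ur.1 - T ε (Ul.1 + v)) * (Ul.1 + v - Ur.1) -
          (T ε Ur.1 - T ε (Ul.1 + u)) * (Ul.1 + u - Ur.1) =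
          (T ε (Ul.1 + u) - T ε (Ul.1 + v)) * (Ul.1 + v - Ur.1) +
          (T ε Ur.1 - T ε (Ul.1 + u)) * (v - u) := by ring
      rw [hid]
      have e1 : |(T ε (Ul.1 + u) - T ε (Ul.1 + v)) * (Ul.1 + v - Ur.1)| ≤
          (K * |v - u|) * pM := by
        rw [abs_mul]
        apply mul_le_mul hfd _ (abs_nonneg _) (by positivity)
        rw [abs_of_nonneg (by linarith only [hκv, hqκ] : (0:ℝ) ≤ Ul.1 + v - Ur.1)]
        linarith only [h4, hq1, hpf1]
      have e2 : |(T ε Ur.1 - T ε (Ul.1 + u)) * (v - u)| ≤ τ2 * |v - u| := by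
        rw [abs_mul]
        apply mul_le_mul_of_nonneg_right _ (abs_nonneg _)
        rw [abs_of_nonneg (by linarith only [hfm u hκu, hm0] :
          (0:ℝ) ≤ T ε Ur.1 - T ε (Ul.1 + u))]
        exact hfub u hκu
      calc |(T ε (Ul.1 + u) - T ε (Ul.1 + v)) * (Ul.1 + v - Ur.1) +
          (T ε Ur.1 - T ε (Ul.1 + u)) * (v - u)| ≤ _ + _ := abs_add_le _ _
        _ ≤ (K * |v - u|) * pM + τ2 * |v - u| := by linarith only [e1, e2]
        _ = (K * pM + τ2) * |v - u| := by ring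
    have hlbu : mS ≤ S2 u := hS2lb u h1
    have hlbv : mS ≤ S2 v := hS2lb v h3
    rw [div_mul_eq_mul_div, le_div_iff₀ (by linarith only [hmS0] : (0:ℝ) < 2 * mS)]
    have hsum : |S2 v ^ 2 - S2 u ^ 2| = |S2 v - S2 u| * (S2 v + S2 u) := by
      rw [show S2 v ^ 2 - S2 u ^ 2 = (S2 v - S2 u) * (S2 v + S2 u) by ring, abs_mul,
        abs_of_nonneg (by linarith only [hlbu, hlbv, hmS0] : (0:ℝ) ≤ S2 v + S2 u)]
    have h7 : |S2 v - S2 u| * (2 * mS) ≤ |S2 v - S2 u| * (S2 v + S2 u) :=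
      mul_le_mul_of_nonneg_left (by linarith only [hlbu, hlbv]) (abs_nonneg _)
    rw [hsum] at hsqd
    linarith only [h7, hsqd]
  -- S1 lemmas
  have hS1zero : S1 0 = 0 := by rw [hS1def]; simp
  have hS1nonneg : ∀ t, 0 ≤ t → 0 ≤ S1 t := by
    intro t ht
    rw [hS1def]; dsimp only; rw [if_pos ht]
    exact Real.sqrt_nonneg _
  have hS1le : ∀ t, t < 0 → κ ≤ Ul.1 + t → S1 t ≤ 0 := by
    intro t ht hκt
    rw [hS1def]; dsimp only; rw [if_neg (not_le.2 ht)]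
    have h1 := (hGdiff t 0 hκt (le_of_lt ht)).1
    rw [hG0] at h1
    linarith only [h1]
  have hS1mono : ∀ u v, κ < Ul.1 + u → u ≤ v → S1 u ≤ S1 v := by
    intro u v hu huv
    rcases le_or_gt 0 u with h0u | h0u
    · have h0v : 0 ≤ v := le_trans h0u huv
      rw [hS1def]; dsimp only; rw [if_pos h0u, if_pos h0v]
      apply Real.sqrt_le_sqrt
      have e1 : T ε (Ul.1 + v) ≤ T ε (Ul.1 + u) :=
        T_anti_le hκ hγi hγc hε hT' (by linarith only [hu, hκ]) (by linarith only [huv])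
      have e2 : T ε (Ul.1 + v) ≤ T ε Ul.1 :=
        T_anti_le hκ hγi hγc hε hT' (by linarith only [ha0, hκ]) (by linarith only [h0v])
      exact mul_le_mul (by linarith only [e1]) huv h0u (by linarith only [e2])
    · rcases le_or_gt 0 v with h0v | h0v
      · have l1 : S1 u ≤ 0 := hS1le u h0u (le_of_lt hu)
        have l2 : 0 ≤ S1 v := hS1nonneg v h0v
        linarith only [l1, l2]
      · rw [hS1def]; dsimp only; rw [if_neg (not_le.2 h0u), if_neg (not_le.2 h0v)]
        have h1 := (hGdiff u v (le_of_lt hu) huv).1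
        linarith only [h1]
  have hS1ub : ∀ t, 0 ≤ t → S1 t ≤ sK * t := by
    intro t ht
    rw [hS1def]; dsimp only; rw [if_pos ht]
    have h1 : T ε Ul.1 - T ε (Ul.1 + t) ≤ K * t := by
      have h2 := hlip Ul.1 (Ul.1 + t) (le_of_lt ha0) (by linarith only [ha0, ht])
      have h3 : |Ul.1 - (Ul.1 + t)| = t := by
        rw [show Ul.1 - (Ul.1 + t) = -t by ring, abs_neg, abs_of_nonneg ht]
      rw [h3] at h2
      calc T ε Ul.1 - T ε (Ul.1 + t) ≤ |T ε Ul.1 - T ε (Ul.1 + t)| := le_abs_self _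
        _ ≤ K * t := h2
    calc Real.sqrt ((T ε Ul.1 - T ε (Ul.1 + t)) * t) ≤ Real.sqrt ((K * t) * t) :=
        Real.sqrt_le_sqrt (mul_le_mul_of_nonneg_right h1 ht)
      _ = sK * t := by
        rw [show (K * t) * t = K * (t * t) by ring, Real.sqrt_mul hK0.le,
          Real.sqrt_mul_self ht, hsKdef]
  -- incoming data relations
  have hUr2 : Ur.2 = Um.2 - S2 σ' := by
    rw [hUrEq, Phi2_snd_neg _ hσb, hS2def]
    dsimp only
    rw [show Um.1 + σb'' = Ur.1 by linarith only [hUr1], hUm1,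
      show -σb'' = Ul.1 + σ' - Ur.1 by linarith only [hUr1, hUm1]]
  have hpcκ : κ ≤ Ul.1 + σ' := by
    rw [← hUm1]; linarith only [hb1, hpc1]
  have hUm2 : |Um.2 - Ul.2| ≤ sK * |σ'| := by
    rcases lt_or_ge σ' 0 with hneg | hpos
    · rw [hUmEq, Phi2_snd_neg _ hneg]
      have h2 := hlip (Ul.1 + σ') Ul.1 hpcκ (le_of_lt ha0)
      have h3 : |Ul.1 + σ' - Ul.1| = -σ' := by
        rw [show Ul.1 + σ' - Ul.1 = σ' by ring, abs_of_neg hneg]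
      rw [h3] at h2
      have h4 : T ε (Ul.1 + σ') - T ε Ul.1 ≤ K * (-σ') :=
        le_trans (le_abs_self _) h2
      have h5 : (T ε (Ul.1 + σ') - T ε Ul.1) * (-σ') ≤ (K * (-σ')) * (-σ') :=
        mul_le_mul_of_nonneg_right h4 (by linarith only [hneg])
      have h6 : Real.sqrt ((T ε (Ul.1 + σ') - T ε Ul.1) * (-σ')) ≤ sK * (-σ') := by
        calc Real.sqrt ((T ε (Ul.1 + σ') - T ε Ul.1) * (-σ')) ≤
            Real.sqrt ((K * (-σ')) * (-σ')) := Real.sqrt_le_sqrt h5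
          _ = sK * (-σ') := by
            rw [show (K * (-σ')) * (-σ') = K * ((-σ') * (-σ')) by ring,
              Real.sqrt_mul hK0.le, Real.sqrt_mul_self (by linarith only [hneg]), hsKdef]
      rw [show Ul.2 - Real.sqrt ((T ε (Ul.1 + σ') - T ε Ul.1) * (-σ')) - Ul.2 =
        -(Real.sqrt ((T ε (Ul.1 + σ') - T ε Ul.1) * (-σ'))) by ring, abs_neg,
        abs_of_nonneg (Real.sqrt_nonneg _), abs_of_neg hneg]
      exact h6
    · rw [hUmEq, Phi2_snd_nonneg _ hpos]
      have hGs : G σ' = ∫ ξ in Ul.1..(Ul.1 + σ'), Real.sqrt (-deriv (T ε) ξ) := by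
        rw [hGdef]
      rw [← hGs, show Ul.2 + G σ' - Ul.2 = G σ' by ring]
      have h7 := hGdiff 0 σ' (by linarith only [ha0]) hpos
      rw [hG0, sub_zero] at h7
      rw [abs_of_nonneg h7.1, abs_of_nonneg hpos]
      linarith only [h7.2]
  have hF0 : F 0 = Ul.2 - S2 0 := by
    rw [hFdef]; dsimp only; rw [hS1zero]; ring
  have hregion0 : pκ ≤ Ul.1 + 0 ∧ Ul.1 + 0 ≤ pM := by
    constructor
    · linarith only [hpκ2, ha1]
    · linarith only [ha2, hpc12, hpM1]
  have hregionσ : pκ ≤ Ul.1 + σ' ∧ Ul.1 + σ' ≤ pM := by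
    rw [← hUm1]
    constructor
    · linarith only [hpκ2, hb1]
    · linarith only [hb2, hpM1]
  have hnear : |Ur.2 - F 0| ≤ L * |σ'| := by
    have h1 : Ur.2 - F 0 = (Um.2 - Ul.2) - (S2 σ' - S2 0) := by
      rw [hUr2, hF0]; ring
    have h2 := hS2lip 0 σ' hregion0.1 hregion0.2 hregionσ.1 hregionσ.2
    rw [sub_zero] at h2
    rw [h1, hLdef]
    calc |Um.2 - Ul.2 - (S2 σ' - S2 0)| ≤ |Um.2 - Ul.2| + |S2 σ' - S2 0| :=
        abs_sub _ _
      _ ≤ sK * |σ'| + ((K * pM + τ2) / (2 * mS)) * |σ'| := by linarith only [hUm2, h2]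
      _ = (sK + (K * pM + τ2) / (2 * mS)) * |σ'| := by ring
  -- continuity ingredients
  have hS2contAt : ∀ t : ℝ, 0 < Ul.1 + t → ContinuousAt S2 t := by
    intro t ht
    rw [hS2def]
    have c1 : ContinuousAt (fun s : ℝ => Ul.1 + s) t := by fun_prop
    have c2 : ContinuousAt (fun s : ℝ => T ε (Ul.1 + s)) t :=
      (T_cont hκ hγi hγc hε hT' ht).comp c1
    have c3 : ContinuousAt
        (fun s : ℝ => (T ε Ur.1 - T ε (Ul.1 + s)) * (Ul.1 + s - Ur.1)) t :=
      (continuousAt_const.sub c2).mul (c1.sub continuousAt_const)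
    exact Real.continuous_sqrt.continuousAt.comp c3
  have hGlip : ∀ x y, κ ≤ Ul.1 + x → κ ≤ Ul.1 + y → |G x - G y| ≤ sK * |x - y| := by
    intro x y hx hy
    rcases le_total x y with h | h
    · have h1 := hGdiff x y hx h
      rw [abs_sub_comm, abs_of_nonneg h1.1, abs_sub_comm, abs_of_nonneg
        (by linarith only [h] : (0:ℝ) ≤ y - x)]
      linarith only [h1.2]
    · have h1 := hGdiff y x hy h
      rw [abs_of_nonneg h1.1, abs_of_nonneg (by linarith only [h] : (0:ℝ) ≤ x - y)]
      linarith only [h1.2]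
  have hGcont : ∀ s : Set ℝ, (∀ x ∈ s, κ ≤ Ul.1 + x) → ContinuousOn G s := by
    intro s hs t ht
    rw [Metric.continuousWithinAt_iff]
    intro e he
    refine ⟨e / (sK + 1), by positivity, ?_⟩
    intro x hx hdist
    rw [Real.dist_eq] at hdist ⊢
    have h1 := hGlip x t (hs x hx) (hs t ht)
    have h2 : sK * |x - t| ≤ sK * (e / (sK + 1)) :=
      mul_le_mul_of_nonneg_left (le_of_lt hdist) (le_of_lt hsK0)
    have h3 : sK * (e / (sK + 1)) < e := by
      rw [mul_div_assoc', div_lt_iff₀ (by linarith only [hsK0] : (0:ℝ) < sK + 1)]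
      linarith only [he]
    linarith only [h1, h2, h3]
  -- main existence of σ1
  have hmain : ∃ σ1 : ℝ, F σ1 = Ur.2 ∧ pκ ≤ Ul.1 + σ1 ∧ Ul.1 + σ1 ≤ pM ∧
      |σ1| ≤ C0 * |σ'| := by
    by_cases hs0 : σ' = 0
    · refine ⟨0, ?_, hregion0.1, hregion0.2, by simp [hs0]⟩
      subst hs0
      have hUm2' : Um.2 = Ul.2 := by
        rw [hUmEq, Phi2_snd_nonneg _ (le_refl (0:ℝ))]
        simp
      rw [hF0, hUr2, hUm2']
    · have hs : 0 < |σ'| := abs_pos.2 hs0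
      have hI0 : 0 < C0 * |σ'| := mul_pos hC00 hs
      have hIδ : C0 * |σ'| < C0 * δf := mul_lt_mul_of_pos_left hσδ hC00
      have hI1 : C0 * |σ'| ≤ (pc1 - κ) / 2 :=
        le_trans (le_of_lt hIδ) (le_trans hδfC0 (min_le_left _ _))
      have hI2 : C0 * |σ'| ≤ 1 :=
        le_trans (le_of_lt hIδ) (le_trans hδfC0 (min_le_right _ _))
      have hregI : ∀ t, -(C0 * |σ'|) ≤ t → t ≤ C0 * |σ'| →
          pκ ≤ Ul.1 + t ∧ Ul.1 + t ≤ pM := by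
        intro t h1 h2
        constructor
        · rw [hpκdef]; linarith only [ha1, h1, hI1]
        · rw [hpMdef]; linarith only [ha2, h2, hI2]
      have hslopeI : (L + 1) * |σ'| ≤ S2 (C0 * |σ'|) - S2 0 := by
        have h1 := hS2slope 0 (C0 * |σ'|) hregion0.1 (le_of_lt hI0)
          (hregI _ (by linarith only [hI0]) (le_refl _)).2
        have h2 : m * (C0 * |σ'| - 0) / (2 * Mb) = (L + 1) * |σ'| := by
          rw [← hC0slope]; ring
        linarith only [h1, h2]
      have hslopemI : (L + 1) * |σ'| ≤ S2 0 - S2 (-(C0 * |σ'|)) := by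
        have h1 := hS2slope (-(C0 * |σ'|)) 0
          (hregI _ (le_refl _) (by linarith only [hI0])).1
          (by linarith only [hI0]) hregion0.2
        have h2 : m * (0 - -(C0 * |σ'|)) / (2 * Mb) = (L + 1) * |σ'| := by
          rw [← hC0slope]; ring
        linarith only [h1, h2]
      have hnear' := abs_le.1 hnear
      have hFIdef : F (C0 * |σ'|) = Ul.2 - S1 (C0 * |σ'|) - S2 (C0 * |σ'|) := by
        rw [hFdef]
      have hFmIdef : F (-(C0 * |σ'|)) =
          Ul.2 - S1 (-(C0 * |σ'|)) - S2 (-(C0 * |σ'|)) := by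
        rw [hFdef]
      have hFI : F (C0 * |σ'|) ≤ Ur.2 - |σ'| := by
        have h1 := hS1nonneg (C0 * |σ'|) (le_of_lt hI0)
        rw [hFIdef]
        linarith only [hnear'.1, hF0, hslopeI, h1]
      have hFmI : Ur.2 + |σ'| ≤ F (-(C0 * |σ'|)) := by
        have hκmI : κ ≤ Ul.1 + -(C0 * |σ'|) :=
          le_trans (le_of_lt hpκ1) (hregI _ (le_refl _) (by linarith only [hI0])).1
        have h1 := hS1le (-(C0 * |σ'|)) (by linarith only [hI0]) hκmI
        rw [hFmIdef]
        linarith only [hnear'.2, hF0, hslopemI, h1]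
      by_cases hcase : Ur.2 ≤ F 0
      · have hFA : ∀ t, 0 ≤ t →
            F t = Ul.2 - Real.sqrt ((T ε Ul.1 - T ε (Ul.1 + t)) * t) - S2 t := by
          intro t ht
          rw [hFdef, hS1def]; dsimp only; rw [if_pos ht]
        have hcontA : ContinuousOn
            (fun t => Ul.2 - Real.sqrt ((T ε Ul.1 - T ε (Ul.1 + t)) * t) - S2 t)
            (Icc 0 (C0 * |σ'|)) := by
          intro t ht
          have hreg := hregI t (by linarith only [ht.1, hI0]) ht.2
          have hpos : 0 < Ul.1 + t := by linarith only [hreg.1, hpκ1, hκ]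
          have c1 : ContinuousAt (fun s : ℝ => Ul.1 + s) t := by fun_prop
          have c2 : ContinuousAt (fun s : ℝ => T ε (Ul.1 + s)) t :=
            (T_cont hκ hγi hγc hε hT' hpos).comp c1
          have c3 : ContinuousAt
              (fun s : ℝ => Real.sqrt ((T ε Ul.1 - T ε (Ul.1 + s)) * s)) t :=
            Real.continuous_sqrt.continuousAt.comp
              ((continuousAt_const.sub c2).mul continuousAt_id)
          exact ((continuousAt_const.sub c3).sub (hS2contAt t hpos)).continuousWithinAt
        have hIVT := intermediate_value_Icc' (le_of_lt hI0) hcontA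
        have hmem : Ur.2 ∈ Icc
            (Ul.2 - Real.sqrt ((T ε Ul.1 - T ε (Ul.1 + (C0 * |σ'|))) * (C0 * |σ'|)) -
              S2 (C0 * |σ'|))
            (Ul.2 - Real.sqrt ((T ε Ul.1 - T ε (Ul.1 + 0)) * 0) - S2 0) := by
          constructor
          · rw [← hFA _ (le_of_lt hI0)]; linarith only [hFI, hs]
          · rw [← hFA 0 (le_refl _), hF0]; rw [hF0] at hcase; exact hcase
        obtain ⟨σ1, hσ1mem, hσ1eq⟩ := hIVT hmem
        refine ⟨σ1, ?_, (hregI σ1 (by linarith only [hσ1mem.1, hI0]) hσ1mem.2).1,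
          (hregI σ1 (by linarith only [hσ1mem.1, hI0]) hσ1mem.2).2, ?_⟩
        · rw [hFA σ1 hσ1mem.1]; exact hσ1eq
        · rw [abs_of_nonneg hσ1mem.1]; exact hσ1mem.2
      · push_neg at hcase
        have hFB : ∀ t, t ≤ 0 → F t = Ul.2 - G t - S2 t := by
          intro t ht
          rcases lt_or_eq_of_le ht with hlt | heq
          · rw [hFdef, hS1def]; dsimp only; rw [if_neg (not_le.2 hlt)]
          · rw [heq, hF0, hG0]; ring
        have hcontB : ContinuousOn (fun t => Ul.2 - G t - S2 t)
            (Icc (-(C0 * |σ'|)) 0) := by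
          have hGc := hGcont (Icc (-(C0 * |σ'|)) 0) (fun x hx =>
            le_trans (le_of_lt hpκ1)
              (hregI x hx.1 (by linarith only [hx.2, hI0])).1)
          intro t ht
          have hreg := hregI t ht.1 (by linarith only [ht.2, hI0])
          have hpos : 0 < Ul.1 + t := by linarith only [hreg.1, hpκ1, hκ]
          exact ((continuousWithinAt_const.sub (hGc t ht)).sub
            (hS2contAt t hpos).continuousWithinAt)
        have hIVT := intermediate_value_Icc'
          (by linarith only [hI0] : -(C0 * |σ'|) ≤ (0:ℝ)) hcontB
        have hmem : Ur.2 ∈ Icc (Ul.2 - G 0 - S2 0)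
            (Ul.2 - G (-(C0 * |σ'|)) - S2 (-(C0 * |σ'|))) := by
          constructor
          · rw [← hFB 0 (le_refl _)]; linarith only [hcase]
          · rw [← hFB _ (by linarith only [hI0] : -(C0 * |σ'|) ≤ (0:ℝ))]
            linarith only [hFmI, hs]
        obtain ⟨σ1, hσ1mem, hσ1eq⟩ := hIVT hmem
        refine ⟨σ1, ?_, (hregI σ1 hσ1mem.1 (by linarith only [hσ1mem.2, hI0])).1,
          (hregI σ1 hσ1mem.1 (by linarith only [hσ1mem.2, hI0])).2, ?_⟩
        · rw [hFB σ1 hσ1mem.2]; exact hσ1eq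
        · rw [abs_of_nonpos hσ1mem.2]; linarith only [hσ1mem.1]
  -- final assembly
  obtain ⟨σ1, hFσ1, hreg1, hreg2, habs⟩ := hmain
  have hκσ1 : κ < Ul.1 + σ1 := lt_of_lt_of_le hpκ1 hreg1
  have hkey := key σ1 hκσ1
  refine ⟨σ1, Ur.1 - Ul.1 - σ1, by linarith only [hκσ1, hqκ], ?_, ?_, ?_, ?_⟩
  · rw [show Ur.1 - Ul.1 - σ1 = Ur.1 - (Ul.1 + σ1) by ring, hkey, hFσ1]
  · rw [Phi1_fst]; exact hκσ1
  · have hσb''eq : σb'' = Ur.1 - Ul.1 - σ' := by linarith only [hUr1, hUm1]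
    rw [hσb''eq, show Ur.1 - Ul.1 - σ1 - (Ur.1 - Ul.1 - σ') = σ' - σ1 by ring]
    have h8 : |σ' - σ1| ≤ |σ'| + |σ1| := abs_sub _ _
    rw [hCfdef]
    linarith only [habs, h8]
  · intro t1 t2 ht2 hEq hκt1
    rw [Phi1_fst] at hκt1
    obtain ⟨ht2eq, hFt1⟩ := hsol t1 t2 ht2 hκt1 hEq
    have hFanti : ∀ u v, κ < Ul.1 + u → u < v → F v < F u := by
      intro u v hu huv
      have h1 := hS1mono u v hu (le_of_lt huv)
      have h2 := hS2mono u v hu huv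
      rw [hFdef]; dsimp only; linarith only [h1, h2]
    have ht1σ1 : t1 = σ1 := by
      rcases lt_trichotomy t1 σ1 with hlt | heq | hgt
      · exfalso
        have h9 := hFanti t1 σ1 hκt1 hlt
        rw [hFσ1, ← hFt1] at h9
        exact absurd h9 (lt_irrefl _)
      · exact heq
      · exfalso
        have h9 := hFanti σ1 t1 hκσ1 hgt
        rw [hFσ1, ← hFt1] at h9
        exact absurd h9 (lt_irrefl _)
    exact ⟨ht1σ1, by rw [ht2eq, ht1σ1]⟩
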